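/- arXiv:2506.20336 — 2 statements merged into one kernel-verified Lean document; each statement's English description precedes it below -/
import Mathlib

section
/- The Gamma-Gamma density f(η) = (2(αβ)^{(α+β)/2} / (Γ(α)Γ(β))) · η^{(α+β)/2 - 1} · K_{α-β}(2√(αβη)) integrates to 1 over (0, ∞), for α, β > 0. -/
open MeasureTheory Real Set Filter

/-- Modified Bessel function of the second kind (integral representation). -/
noncomputable def besselK (ν x : ℝ) : ℝ :=
  ∫ t in Set.Ioi (0:ℝ), Real.exp (-x * Real.cosh t) * Real.cosh (ν * t)

-- L1: core exponential-decay integrability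
lemma L1 (a : ℝ) {w : ℝ} (hw : 0 < w) :
    IntegrableOn (fun t : ℝ => Real.exp (a * t - w * Real.cosh t)) (Set.Ioi 0) := by
  refine integrable_of_isBigO_exp_neg (a := 0) one_pos (by fun_prop) ?_
  have hb : Tendsto (fun t : ℝ => Real.exp ((a + 1) * t - w / 2 * Real.exp t))
      atTop (nhds 0) := by
    have h0 := (tendsto_rpow_mul_exp_neg_mul_atTop_nhds_zero (a + 1) (w / 2)
      (by linarith)).comp Real.tendsto_exp_atTop
    refine h0.congr (fun t => ?_)
    simp only [Function.comp]
    rw [← Real.exp_mul, ← Real.exp_add, mul_comm t (a + 1), sub_eq_add_neg, neg_mul]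
  rw [Asymptotics.isBigO_iff]
  refine ⟨1, ?_⟩
  filter_upwards [hb.eventually (eventually_le_nhds zero_lt_one)] with t ht
  rw [Real.exp_le_one_iff] at ht
  have hcosh : Real.exp t / 2 ≤ Real.cosh t := by
    rw [Real.cosh_eq]; have := Real.exp_pos (-t); linarith
  have h2 : w * (Real.exp t / 2) ≤ w * Real.cosh t := by
    exact mul_le_mul_of_nonneg_left hcosh hw.le
  rw [Real.norm_eq_abs, Real.norm_eq_abs, abs_of_pos (Real.exp_pos _),
    abs_of_pos (Real.exp_pos _), one_mul]
  refine Real.exp_le_exp.mpr ?_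
  nlinarith

-- L2: Bessel integrand integrability
lemma L2 (ν : ℝ) {x : ℝ} (hx : 0 < x) :
    IntegrableOn (fun t : ℝ => Real.exp (-x * Real.cosh t) * Real.cosh (ν * t))
      (Set.Ioi 0) := by
  have h : IntegrableOn
      (fun t : ℝ => (Real.exp (ν * t - x * Real.cosh t) +
        Real.exp (-ν * t - x * Real.cosh t)) / 2) (Set.Ioi 0) :=
    ((L1 ν hx).add (L1 (-ν) hx)).div_const 2
  refine h.congr_fun (fun t _ => ?_) measurableSet_Ioi
  beta_reduce
  rw [show ν * t - x * Real.cosh t = ν * t + -x * Real.cosh t by ring,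
    show -ν * t - x * Real.cosh t = -(ν * t) + -x * Real.cosh t by ring,
    Real.exp_add, Real.exp_add, Real.cosh_eq (ν * t)]
  ring

-- L3: key representation of besselK
lemma L3 (ν : ℝ) {z : ℝ} (hz : 0 < z) :
    besselK ν (2 * Real.sqrt z) =
      (1 / 2) * z ^ (-ν / 2) *
        ∫ x in Set.Ioi (0:ℝ), x ^ (ν - 1) * Real.exp (-x - z / x) := by
  set r := Real.sqrt z with hrdef
  have hr0 : 0 < r := Real.sqrt_pos.mpr hz
  have hrr : r * r = z := Real.mul_self_sqrt hz.le
  set g : ℝ → ℝ := fun t => Real.exp (ν * t - 2 * r * Real.cosh t) with hgdef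
  -- change of variables x = r * exp t
  have himg : (fun t : ℝ => r * Real.exp t) '' Set.univ = Set.Ioi 0 := by
    rw [Set.image_univ]
    ext x
    simp only [Set.mem_range, Set.mem_Ioi]
    constructor
    · rintro ⟨t, rfl⟩; positivity
    · intro hx
      refine ⟨Real.log (x / r), ?_⟩
      rw [Real.exp_log (by positivity)]
      field_simp
  have hderiv : ∀ t ∈ (Set.univ : Set ℝ),
      HasDerivWithinAt (fun t => r * Real.exp t) (r * Real.exp t) Set.univ t :=
    fun t _ => ((Real.hasDerivAt_exp t).const_mul r).hasDerivWithinAt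
  have hinj : Set.InjOn (fun t => r * Real.exp t) Set.univ := by
    intro a _ b _ h
    exact Real.exp_injective (mul_left_cancel₀ hr0.ne' h)
  have hsub := integral_image_eq_integral_abs_deriv_smul MeasurableSet.univ hderiv hinj
    (fun x => x ^ (ν - 1) * Real.exp (-x - z / x))
  rw [himg, Measure.restrict_univ] at hsub
  have hsimp : ∀ t : ℝ, |r * Real.exp t| •
      ((r * Real.exp t) ^ (ν - 1) * Real.exp (-(r * Real.exp t) - z / (r * Real.exp t)))
      = r ^ ν * g t := by
    intro t
    have he : (0:ℝ) < Real.exp t := Real.exp_pos t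
    rw [abs_of_pos (by positivity), smul_eq_mul]
    rw [Real.mul_rpow hr0.le he.le, ← Real.exp_mul]
    have hz' : z / (r * Real.exp t) = r * Real.exp (-t) := by
      rw [Real.exp_neg, ← hrr]; field_simp
    rw [hz']
    simp only [hgdef, Real.cosh_eq]
    rw [show ν * t - 2 * r * ((Real.exp t + Real.exp (-t)) / 2)
        = t + t * (ν - 1) + (-(r * Real.exp t) - r * Real.exp (-t)) by ring,
      Real.exp_add, Real.exp_add,
      show r ^ ν = r ^ (1 + (ν - 1)) by norm_num, Real.rpow_add hr0, Real.rpow_one]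
    ring
  rw [hsub]
  simp_rw [hsimp]
  rw [MeasureTheory.integral_const_mul]
  -- split the real line integral
  have hIoi : IntegrableOn g (Set.Ioi 0) := L1 ν (by positivity)
  have hneg : IntegrableOn (fun t => g (-t)) (Set.Ioi 0) := by
    have := L1 (-ν) (show (0:ℝ) < 2 * r by positivity)
    refine this.congr_fun (fun t _ => ?_) measurableSet_Ioi
    simp only [hgdef, Real.cosh_neg]
    ring_nf
  have hIic : IntegrableOn g (Set.Iic 0) := by
    have A : MeasurableEmbedding (fun x : ℝ => -x) :=
      (Homeomorph.neg ℝ).isClosedEmbedding.measurableEmbedding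
    have h1 : ((volume : Measure ℝ).restrict (Set.Ici 0)).map (fun x : ℝ => -x)
        = ((volume : Measure ℝ).map (fun x : ℝ => -x)).restrict (Set.Iic 0) := by
      rw [Measure.restrict_map measurable_neg measurableSet_Iic,
        show ((fun x : ℝ => -x) ⁻¹' Set.Iic 0) = Set.Ici 0 from by ext x; simp]
    have h2 : (volume : Measure ℝ).map (fun x : ℝ => -x) = volume :=
      Measure.map_neg_eq_self (volume : Measure ℝ)
    have hmap : (volume : Measure ℝ).restrict (Set.Iic 0)
        = ((volume : Measure ℝ).restrict (Set.Ici 0)).map (fun x : ℝ => -x) :=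
      (h1.trans (by rw [h2])).symm
    rw [IntegrableOn, hmap, A.integrable_map_iff]
    have : IntegrableOn (fun t => g (-t)) (Set.Ici 0) := by
      rwa [integrableOn_Ici_iff_integrableOn_Ioi]
    exact this
  have hsplit : ∫ t : ℝ, g t = (∫ t in Set.Iic 0, g t) + ∫ t in Set.Ioi 0, g t :=
    (intervalIntegral.integral_Iic_add_Ioi hIic hIoi).symm
  have hrefl : ∫ t in Set.Iic 0, g t = ∫ t in Set.Ioi 0, g (-t) := by
    have := integral_comp_neg_Ioi 0 g
    rw [neg_zero] at this
    rw [this]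
  have hcombine : (∫ t in Set.Ioi (0:ℝ), g (-t)) + ∫ t in Set.Ioi 0, g t
      = 2 * besselK ν (2 * r) := by
    rw [← integral_add hneg hIoi, besselK, ← MeasureTheory.integral_const_mul]
    refine setIntegral_congr_fun measurableSet_Ioi (fun t _ => ?_)
    simp only [hgdef, Real.cosh_neg]
    rw [Real.cosh_eq (ν * t)]
    rw [show ν * -t - 2 * r * Real.cosh t = -(ν * t) + -(2 * r) * Real.cosh t by ring,
      show ν * t - 2 * r * Real.cosh t = ν * t + -(2 * r) * Real.cosh t by ring,
      Real.exp_add, Real.exp_add]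
    ring
  rw [hsplit, hrefl, hcombine]
  have hrpow : r ^ ν = z ^ (ν / 2) := by
    rw [hrdef, Real.sqrt_eq_rpow, ← Real.rpow_mul hz.le]
    congr 1
    ring
  rw [hrpow]
  have hone : z ^ (-ν / 2) * z ^ (ν / 2) = 1 := by
    rw [← Real.rpow_add hz, show -ν / 2 + ν / 2 = 0 by ring, Real.rpow_zero]
  linear_combination (-besselK ν (2 * r)) * hone

-- L4: Gamma-type integral value
lemma L4 {b r : ℝ} (hb : 0 < b) (hr : 0 < r) :
    IntegrableOn (fun η : ℝ => η ^ (b - 1) * Real.exp (-(r * η))) (Set.Ioi 0) := by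
  have h := integrableOn_rpow_mul_exp_neg_mul_rpow (p := 1) (s := b - 1) (b := r)
    (by linarith) one_pos hr
  refine h.congr_fun (fun t ht => ?_) measurableSet_Ioi
  beta_reduce
  rw [Real.rpow_one]; ring_nf

theorem gammaGamma_integrates_to_one (α β : ℝ) (hα : 0 < α) (hβ : 0 < β) :
    ∫ η in Set.Ioi (0:ℝ),
      (2 * (α * β) ^ ((α + β) / 2) / (Real.Gamma α * Real.Gamma β)) *
        η ^ ((α + β) / 2 - 1) * besselK (α - β) (2 * Real.sqrt (α * β * η)) = 1 := by
  have hc : (0:ℝ) < α * β := mul_pos hα hβ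
  have hΓα : 0 < Real.Gamma α := Real.Gamma_pos_of_pos hα
  have hΓβ : 0 < Real.Gamma β := Real.Gamma_pos_of_pos hβ
  set K' : ℝ := (α * β) ^ ((α + β) / 2) * (α * β) ^ (-(α - β) / 2)
      / (Real.Gamma α * Real.Gamma β) with hK'
  set u : ℝ × ℝ → ℝ := fun p => p.2 ^ (β - 1) *
      (p.1 ^ (α - β - 1) * Real.exp (-p.1) * Real.exp (-(α * β / p.1 * p.2))) with hu_def
  -- Step 1+2: pointwise rewrite of the integrand
  have step12 : ∀ η ∈ Set.Ioi (0:ℝ),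
      (2 * (α * β) ^ ((α + β) / 2) / (Real.Gamma α * Real.Gamma β)) *
        η ^ ((α + β) / 2 - 1) * besselK (α - β) (2 * Real.sqrt (α * β * η))
      = K' * ∫ x in Set.Ioi (0:ℝ), u (x, η) := by
    intro η hη
    have hη' : (0:ℝ) < η := hη
    have hz : (0:ℝ) < α * β * η := mul_pos hc hη'
    rw [L3 (α - β) hz]
    have hA : ∫ x in Set.Ioi (0:ℝ), u (x, η)
        = η ^ (β - 1) * ∫ x in Set.Ioi (0:ℝ),
            x ^ (α - β - 1) * Real.exp (-x - α * β * η / x) := by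
      rw [← MeasureTheory.integral_const_mul]
      refine setIntegral_congr_fun measurableSet_Ioi (fun x hx => ?_)
      have hx' : (0:ℝ) < x := hx
      simp only [hu_def]
      rw [show -x - α * β * η / x = -x + -(α * β / x * η) by field_simp; ring,
        Real.exp_add]
      ring
    rw [hA, Real.mul_rpow hc.le hη'.le]
    have hpow : η ^ ((α + β) / 2 - 1) * η ^ (-(α - β) / 2) = η ^ (β - 1) := by
      rw [← Real.rpow_add hη', show (α + β) / 2 - 1 + -(α - β) / 2 = β - 1 by ring]
    set B := ∫ x in Set.Ioi (0:ℝ), x ^ (α - β - 1) * Real.exp (-x - α * β * η / x)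
    rw [hK']
    linear_combination (B * (α * β) ^ (-(α - β) / 2) * (α * β) ^ ((α + β) / 2)
      / (Real.Gamma α * Real.Gamma β)) * hpow
  rw [setIntegral_congr_fun measurableSet_Ioi step12, MeasureTheory.integral_const_mul]
  -- measurability of u on the product
  have hprodmeas : ((volume : Measure ℝ).restrict (Set.Ioi 0)).prod
        ((volume : Measure ℝ).restrict (Set.Ioi 0))
      = ((volume : Measure ℝ).prod volume).restrict (Set.Ioi 0 ×ˢ Set.Ioi 0) :=
    Measure.prod_restrict _ _
  have hcont : ContinuousOn u (Set.Ioi 0 ×ˢ Set.Ioi 0) := by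
    have h1 : ContinuousOn (fun p : ℝ × ℝ => p.2 ^ (β - 1))
        (Set.Ioi 0 ×ˢ Set.Ioi 0) :=
      continuous_snd.continuousOn.rpow_const
        (fun p hp => Or.inl (ne_of_gt hp.2))
    have h2 : ContinuousOn (fun p : ℝ × ℝ => p.1 ^ (α - β - 1))
        (Set.Ioi 0 ×ˢ Set.Ioi 0) :=
      continuous_fst.continuousOn.rpow_const
        (fun p hp => Or.inl (ne_of_gt hp.1))
    have h3 : ContinuousOn (fun p : ℝ × ℝ => Real.exp (-(α * β / p.1 * p.2)))
        (Set.Ioi 0 ×ˢ Set.Ioi 0) := by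
      refine Real.continuous_exp.comp_continuousOn ?_
      refine ContinuousOn.neg ?_
      exact (continuousOn_const.div continuous_fst.continuousOn
        (fun p hp => ne_of_gt hp.1)).mul continuous_snd.continuousOn
    exact h1.mul ((h2.mul (Real.continuous_exp.comp continuous_fst.neg).continuousOn).mul h3)
  have hmeas : AEStronglyMeasurable u
      (((volume : Measure ℝ).restrict (Set.Ioi 0)).prod
        ((volume : Measure ℝ).restrict (Set.Ioi 0))) := by
    rw [hprodmeas]
    exact hcont.aestronglyMeasurable (measurableSet_Ioi.prod measurableSet_Ioi)
  -- value of the inner integral in η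
  have key' : ∀ x ∈ Set.Ioi (0:ℝ),
      ∫ η in Set.Ioi (0:ℝ), u (x, η)
        = (Real.Gamma β * (α * β) ^ (-β)) * (x ^ (α - 1) * Real.exp (-x)) := by
    intro x hx
    have hx' : (0:ℝ) < x := hx
    have hr : (0:ℝ) < α * β / x := div_pos hc hx'
    have h1 : ∫ η in Set.Ioi (0:ℝ), u (x, η)
        = (x ^ (α - β - 1) * Real.exp (-x)) *
          ∫ η in Set.Ioi (0:ℝ), η ^ (β - 1) * Real.exp (-(α * β / x * η)) := by
      rw [← MeasureTheory.integral_const_mul]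
      refine setIntegral_congr_fun measurableSet_Ioi (fun η hη => ?_)
      simp only [hu_def]
      ring
    rw [h1, integral_rpow_mul_exp_neg_mul_Ioi hβ hr]
    have h2 : ((1:ℝ) / (α * β / x)) ^ β = x ^ β * ((α * β) ^ β)⁻¹ := by
      rw [one_div_div, Real.div_rpow hx'.le hc.le, div_eq_mul_inv]
    have h3 : x ^ (α - β - 1) * x ^ β = x ^ (α - 1) := by
      rw [← Real.rpow_add hx', show α - β - 1 + β = α - 1 by ring]
    rw [h2, Real.rpow_neg hc.le]
    linear_combination (Real.exp (-x) * ((α * β) ^ β)⁻¹ * Real.Gamma β) * h3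
  -- integrability of u on the product
  have hu : Integrable u
      (((volume : Measure ℝ).restrict (Set.Ioi 0)).prod
        ((volume : Measure ℝ).restrict (Set.Ioi 0))) := by
    rw [MeasureTheory.integrable_prod_iff hmeas]
    constructor
    · filter_upwards [ae_restrict_mem measurableSet_Ioi] with x hx
      have hx' : (0:ℝ) < x := hx
      have hr : (0:ℝ) < α * β / x := div_pos hc hx'
      have h0 : IntegrableOn
          (fun η : ℝ => (x ^ (α - β - 1) * Real.exp (-x)) *
            (η ^ (β - 1) * Real.exp (-(α * β / x * η)))) (Set.Ioi 0) :=
        (L4 hβ hr).const_mul _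
      refine h0.congr_fun (fun η _ => ?_) measurableSet_Ioi
      simp only [hu_def]
      ring
    · have hbase : IntegrableOn (fun x : ℝ => x ^ (α - 1) * Real.exp (-x))
          (Set.Ioi 0) := by
        have := L4 hα one_pos
        refine this.congr_fun (fun t _ => ?_) measurableSet_Ioi
        norm_num
      have hnice : IntegrableOn
          (fun x : ℝ => (Real.Gamma β * (α * β) ^ (-β)) * (x ^ (α - 1) * Real.exp (-x)))
          (Set.Ioi 0) := hbase.const_mul _
      refine hnice.congr_fun (fun x hx => ?_) measurableSet_Ioi
      have hx' : (0:ℝ) < x := hx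
      beta_reduce
      rw [← key' x hx]
      refine (setIntegral_congr_fun measurableSet_Ioi (fun η hη => ?_)).symm
      have hη' : (0:ℝ) < η := hη
      refine norm_of_nonneg ?_
      simp only [hu_def]
      exact mul_nonneg (Real.rpow_nonneg hη'.le _)
        (mul_nonneg (mul_nonneg (Real.rpow_nonneg hx'.le _) (Real.exp_pos _).le)
          (Real.exp_pos _).le)
  -- Fubini swap
  have hswap := MeasureTheory.integral_integral_swap
    (μ := (volume : Measure ℝ).restrict (Set.Ioi 0))
    (ν := (volume : Measure ℝ).restrict (Set.Ioi 0))
    (f := fun x η => u (x, η)) hu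
  rw [← hswap]
  rw [setIntegral_congr_fun measurableSet_Ioi key', MeasureTheory.integral_const_mul]
  have hGa : ∫ x in Set.Ioi (0:ℝ), x ^ (α - 1) * Real.exp (-x) = Real.Gamma α := by
    rw [Real.Gamma_eq_integral hα]
    refine setIntegral_congr_fun measurableSet_Ioi (fun x _ => ?_)
    ring
  rw [hGa, hK', show -(α - β) / 2 = (β - α) / 2 by ring]
  have hone : (α * β) ^ ((α + β) / 2) * (α * β) ^ ((β - α) / 2) * (α * β) ^ (-β)
      = 1 := by
    rw [← Real.rpow_add hc, ← Real.rpow_add hc,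
      show (α + β) / 2 + (β - α) / 2 + -β = 0 by ring, Real.rpow_zero]
  field_simp
  linear_combination hone
end

section
/- The function r ↦ μ_p(r) = (2/(π w²)) ∬_{x²+y² ≤ r_a²} exp(-2((x-r)²+y²)/w²) dx dy is monotonically nonincreasing in r on [0, ∞). -/
open MeasureTheory

noncomputable def PhiG (c t : ℝ) : ℝ := ∫ x in (0:ℝ)..t, Real.exp (-c * x ^ 2)

lemma gauss_cont (c : ℝ) : Continuous fun x : ℝ => Real.exp (-c * x ^ 2) := by
  continuity

lemma PhiG_hasDerivAt (c t : ℝ) : HasDerivAt (PhiG c) (Real.exp (-c * t ^ 2)) t :=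
  ((gauss_cont c).integral_hasStrictDerivAt 0 t).hasDerivAt

lemma oneD_antitone (c a : ℝ) (hc : 0 < c) (ha : 0 ≤ a) :
    AntitoneOn (fun r => ∫ x in Set.Icc (-a) a, Real.exp (-c * (x - r) ^ 2)) (Set.Ici 0) := by
  have hrepr : ∀ r : ℝ, (∫ x in Set.Icc (-a) a, Real.exp (-c * (x - r) ^ 2))
      = PhiG c (a - r) - PhiG c (-a - r) := by
    intro r
    rw [MeasureTheory.integral_Icc_eq_integral_Ioc,
      ← intervalIntegral.integral_of_le (by linarith : -a ≤ a)]
    have h2 := intervalIntegral.integral_comp_sub_right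
      (a := -a) (b := a) (fun u => Real.exp (-c * u ^ 2)) r
    rw [h2]
    rw [← intervalIntegral.integral_interval_sub_left
      ((gauss_cont c).intervalIntegrable 0 (a - r))
      ((gauss_cont c).intervalIntegrable 0 (-a - r))]
    rfl
  have hd : ∀ r : ℝ, HasDerivAt (fun r => PhiG c (a - r) - PhiG c (-a - r))
      (Real.exp (-c * (a + r) ^ 2) - Real.exp (-c * (a - r) ^ 2)) r := by
    intro r
    have h1 : HasDerivAt (fun r : ℝ => PhiG c (a - r)) (-Real.exp (-c * (a - r) ^ 2)) r := by
      have := (PhiG_hasDerivAt c (a - r)).comp r ((hasDerivAt_id r).const_sub a)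
      exact this.congr_deriv (by simp)
    have h2 : HasDerivAt (fun r : ℝ => PhiG c (-a - r)) (-Real.exp (-c * (a + r) ^ 2)) r := by
      have := (PhiG_hasDerivAt c (-a - r)).comp r ((hasDerivAt_id r).const_sub (-a))
      have e : (-a - r) ^ 2 = (a + r) ^ 2 := by ring
      exact this.congr_deriv (by simp [e])
    have := h1.sub h2
    exact this.congr_deriv (by ring)
  have key : AntitoneOn (fun r => PhiG c (a - r) - PhiG c (-a - r)) (Set.Ici 0) := by
    apply antitoneOn_of_deriv_nonpos (convex_Ici 0)
    · exact fun r _ => ((hd r).continuousAt).continuousWithinAt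
    · intro r hr
      rw [interior_Ici] at hr
      exact ((hd r).differentiableAt).differentiableWithinAt
    · intro r hr
      rw [interior_Ici] at hr
      rw [(hd r).deriv]
      have hr0 : (0:ℝ) ≤ r := le_of_lt hr
      have : Real.exp (-c * (a + r) ^ 2) ≤ Real.exp (-c * (a - r) ^ 2) := by
        apply Real.exp_le_exp.2
        nlinarith [mul_nonneg (mul_nonneg hc.le ha) hr0]
      linarith
  intro r1 h1 r2 h2 h12
  simp only
  rw [hrepr r1, hrepr r2]
  exact key h1 h2 h12

set_option maxHeartbeats 1000000 in
theorem capture_prob_antitone (w ra : ℝ) (hw : 0 < w) (hra : 0 < ra) :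
    AntitoneOn (fun r : ℝ =>
      (2 / (Real.pi * w ^ 2)) *
        ∫ p in {p : ℝ × ℝ | p.1 ^ 2 + p.2 ^ 2 ≤ ra ^ 2},
          Real.exp (-2 * ((p.1 - r) ^ 2 + p.2 ^ 2) / w ^ 2))
      (Set.Ici 0) := by
  have hc : (0:ℝ) < 2 / w ^ 2 := by positivity
  set c : ℝ := 2 / w ^ 2 with hc_def
  set D : Set (ℝ × ℝ) := {p : ℝ × ℝ | p.1 ^ 2 + p.2 ^ 2 ≤ ra ^ 2} with hD_def
  set F : ℝ → ℝ × ℝ → ℝ :=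
    fun r p => Real.exp (-2 * ((p.1 - r) ^ 2 + p.2 ^ 2) / w ^ 2) with hF_def
  have hDclosed : IsClosed D := by
    have h : D = (fun p : ℝ × ℝ => p.1 ^ 2 + p.2 ^ 2) ⁻¹' Set.Iic (ra ^ 2) := rfl
    rw [h]
    exact isClosed_Iic.preimage (by continuity)
  have hDmeas : MeasurableSet D := hDclosed.measurableSet
  have hDcompact : IsCompact D := by
    apply Metric.isCompact_of_isClosed_isBounded hDclosed
    apply (Metric.isBounded_closedBall (x := (0 : ℝ × ℝ)) (r := ra)).subset
    intro p hp
    simp only [hD_def, Set.mem_setOf_eq] at hp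
    simp only [Metric.mem_closedBall, dist_zero_right, Prod.norm_def, Real.norm_eq_abs,
      max_le_iff]
    constructor
    · rw [abs_le]; constructor <;> nlinarith [sq_nonneg p.2]
    · rw [abs_le]; constructor <;> nlinarith [sq_nonneg p.1]
  have hFcont : ∀ r, Continuous (F r) := by
    intro r; simp only [hF_def]; continuity
  have hInt : ∀ r, Integrable (D.indicator (F r)) (volume : Measure (ℝ × ℝ)) := by
    intro r
    rw [integrable_indicator_iff hDmeas]
    exact (hFcont r).continuousOn.integrableOn_compact hDcompact
  have hIntProd : ∀ r, Integrable (D.indicator (F r))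
      ((volume : Measure ℝ).prod (volume : Measure ℝ)) := by
    intro r
    have := hInt r
    rwa [MeasureTheory.Measure.volume_eq_prod ℝ ℝ] at this
  have hrep : ∀ r, (∫ p in D, F r p) = ∫ y : ℝ, ∫ x : ℝ, D.indicator (F r) (x, y) := by
    intro r
    rw [← integral_indicator hDmeas, MeasureTheory.Measure.volume_eq_prod ℝ ℝ]
    exact integral_prod_symm _ (hIntProd r)
  intro r1 hr1 r2 hr2 h12
  simp only
  apply mul_le_mul_of_nonneg_left _ (by positivity : (0:ℝ) ≤ 2 / (Real.pi * w ^ 2))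
  show (∫ p in D, F r2 p) ≤ ∫ p in D, F r1 p
  rw [hrep r1, hrep r2]
  apply integral_mono ((hIntProd r2).integral_prod_right) ((hIntProd r1).integral_prod_right)
  intro y
  simp only
  -- sections
  have hS : ∀ (y : ℝ), MeasurableSet {x : ℝ | x ^ 2 + y ^ 2 ≤ ra ^ 2} :=
    fun y => (isClosed_le (by continuity) continuous_const).measurableSet
  have hsec : ∀ r, (fun x => D.indicator (F r) (x, y))
      = Set.indicator {x : ℝ | x ^ 2 + y ^ 2 ≤ ra ^ 2} (fun x => F r (x, y)) := by
    intro r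
    funext x
    by_cases hx : x ^ 2 + y ^ 2 ≤ ra ^ 2
    · have h1 : (x, y) ∈ D := hx
      have h2 : x ∈ {x : ℝ | x ^ 2 + y ^ 2 ≤ ra ^ 2} := hx
      rw [Set.indicator_of_mem h1, Set.indicator_of_mem h2]
    · have h1 : (x, y) ∉ D := hx
      have h2 : x ∉ {x : ℝ | x ^ 2 + y ^ 2 ≤ ra ^ 2} := hx
      rw [Set.indicator_of_notMem h1, Set.indicator_of_notMem h2]
  have hFsplit : ∀ r x, F r (x, y) = Real.exp (-c * (x - r) ^ 2) * Real.exp (-c * y ^ 2) := by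
    intro r x
    show Real.exp (-2 * ((x - r) ^ 2 + y ^ 2) / w ^ 2) = _
    rw [← Real.exp_add]
    have hw2 : w ^ 2 ≠ 0 := by positivity
    congr 1
    rw [hc_def]
    field_simp
    ring
  have hval : ∀ r, (∫ x : ℝ, D.indicator (F r) (x, y))
      = (∫ x in {x : ℝ | x ^ 2 + y ^ 2 ≤ ra ^ 2}, Real.exp (-c * (x - r) ^ 2))
        * Real.exp (-c * y ^ 2) := by
    intro r
    rw [hsec r, integral_indicator (hS y)]
    simp_rw [hFsplit r]
    rw [integral_mul_const]
  rw [hval r1, hval r2]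
  by_cases hy : y ^ 2 ≤ ra ^ 2
  · have hA : (0:ℝ) ≤ ra ^ 2 - y ^ 2 := by linarith
    set s : ℝ := Real.sqrt (ra ^ 2 - y ^ 2) with hs_def
    have hs2 : s ^ 2 = ra ^ 2 - y ^ 2 := Real.sq_sqrt hA
    have hSeq : {x : ℝ | x ^ 2 + y ^ 2 ≤ ra ^ 2} = Set.Icc (-s) s := by
      ext x
      simp only [Set.mem_setOf_eq, Set.mem_Icc]
      constructor
      · intro h
        constructor <;> nlinarith [Real.sqrt_nonneg (ra ^ 2 - y ^ 2)]
      · intro ⟨h1, h2⟩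
        nlinarith
    rw [hSeq]
    apply mul_le_mul_of_nonneg_right _ (Real.exp_nonneg _)
    exact oneD_antitone c s hc (Real.sqrt_nonneg _) hr1 hr2 h12
  · have hSeq : {x : ℝ | x ^ 2 + y ^ 2 ≤ ra ^ 2} = (∅ : Set ℝ) := by
      ext x
      simp only [Set.mem_setOf_eq, Set.mem_empty_iff_false, iff_false]
      intro h
      nlinarith [sq_nonneg x]
    rw [hSeq]
    simp
end
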